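/- Let G be a finite simple graph and (i,j) an edge of G. Then the count of diagonal-free 4-cycles seen from i is unchanged by adding a virtual node: #□^i_{G^{+VN}}(i,j) = #□^i_G(i,j). In particular, every 4-cycle in G^{+VN} based at the edge (i,j) that passes through the virtual node v* contains a diagonal, so it is not counted. -/

import Mathlib

open Finset

attribute [local instance] Classical.propDecidable

variable {V : Type*} [Fintype V] [DecidableEq V]

/-- The virtual-node graph `G^{+VN}`: vertex set `V ∪ {v*}` (here `Option V`, with `none`
playing the role of the virtual node `v*`), original adjacency on `V`, and the virtual
node adjacent to every original vertex. -/
def addVN (G : SimpleGraph V) : SimpleGraph (Option V) where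
  Adj u v :=
    match u, v with
    | some a, some b => G.Adj a b
    | some _, none => True
    | none, some _ => True
    | none, none => False
  symm := by
    constructor
    intro u v h
    cases u <;> cases v <;> simp_all
    exact G.symm.symm _ _ h
  loopless := by
    constructor
    intro u h
    cases u <;> simp_all

/-- `#Δ(i,j)`: number of triangles containing the edge `(i,j)`, i.e. common neighbors. -/
noncomputable def triCount (G : SimpleGraph V) (i j : V) : ℕ :=
  (G.neighborFinset i ∩ G.neighborFinset j).card

/-- `#□^i(i,j)`: number of diagonal-free 4-cycles based at the edge `(i,j)`, seen from `i`. -/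
noncomputable def sqCount (G : SimpleGraph V) (i j : V) : ℕ :=
  ((G.neighborFinset i).filter (fun k => k ≠ j ∧ ¬ G.Adj k j ∧
    ∃ w, G.Adj w k ∧ G.Adj w j ∧ w ≠ i ∧ ¬ G.Adj w i)).card

/-- The diagonal-free 4-cycles based at the edge `(i,j)`, as pairs `(k, w)`. -/
noncomputable def fourCycles (G : SimpleGraph V) (i j : V) : Finset (V × V) :=
  Finset.univ.filter (fun p => G.Adj i p.1 ∧ p.1 ≠ j ∧ ¬ G.Adj p.1 j ∧
    G.Adj p.2 p.1 ∧ G.Adj p.2 j ∧ p.2 ≠ i ∧ ¬ G.Adj p.2 i)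

/-- `γ_max(i,j)`: maximum over nodes `k` of the number of diagonal-free 4-cycles based at
`(i,j)` passing through `k`. -/
noncomputable def gammaMax (G : SimpleGraph V) (i j : V) : ℕ :=
  Finset.univ.sup (fun x => ((fourCycles G i j).filter (fun p => p.1 = x ∨ p.2 = x)).card)

/-- The balanced Forman curvature of the edge `(i,j)`. -/
noncomputable def Ric (G : SimpleGraph V) (i j : V) : ℝ :=
  2 / (G.degree i : ℝ) + 2 / (G.degree j : ℝ) - 2
    + (triCount G i j : ℝ) *
        (2 / (max (G.degree i) (G.degree j) : ℝ) + 1 / (min (G.degree i) (G.degree j) : ℝ))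
    + ((gammaMax G i j : ℝ) / (max (G.degree i) (G.degree j) : ℝ)) *
        ((sqCount G i j : ℝ) + (sqCount G j i : ℝ))

/-- The triangle-only balanced Forman curvature `Ric₀` of the edge `(i,j)`. -/
noncomputable def Ric₀ (G : SimpleGraph V) (i j : V) : ℝ :=
  2 / (G.degree i : ℝ) + 2 / (G.degree j : ℝ) - 2
    + (triCount G i j : ℝ) *
        (2 / (max (G.degree i) (G.degree j) : ℝ) + 1 / (min (G.degree i) (G.degree j) : ℝ))

/-- For an edge `(i,j)` of `G`, the count of diagonal-free 4-cycles seen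
from `i` is unchanged by adding a virtual node, and no diagonal-free 4-cycle of `G^{+VN}`
based at `(i,j)` passes through the virtual node. -/
theorem stmt_4 (G : SimpleGraph V) (i j : V) (hij : G.Adj i j) :
    sqCount (addVN G) (some i) (some j) = sqCount G i j ∧
    ∀ p ∈ fourCycles (addVN G) (some i) (some j), p.1 ≠ none ∧ p.2 ≠ none := by
  have hadj : ∀ a b : V, (addVN G).Adj (some a) (some b) ↔ G.Adj a b := fun a b => Iff.rfl
  have hadjn : ∀ a : V, (addVN G).Adj none (some a) := fun a => trivial
  have hadjn' : ∀ a : V, (addVN G).Adj (some a) none := fun a => trivial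
  constructor
  · unfold sqCount
    rw [show (((addVN G).neighborFinset (some i)).filter (fun k => k ≠ some j ∧
        ¬ (addVN G).Adj k (some j) ∧ ∃ w, (addVN G).Adj w k ∧ (addVN G).Adj w (some j) ∧
          w ≠ some i ∧ ¬ (addVN G).Adj w (some i))) =
        ((G.neighborFinset i).filter (fun k => k ≠ j ∧ ¬ G.Adj k j ∧
          ∃ w, G.Adj w k ∧ G.Adj w j ∧ w ≠ i ∧ ¬ G.Adj w i)).image some from ?_]
    · exact Finset.card_image_of_injective _ (Option.some_injective V)
    ext x
    cases x with
    | none =>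
      simp only [Finset.mem_filter, SimpleGraph.mem_neighborFinset, Finset.mem_image]
      constructor
      · rintro ⟨-, -, hnadj, -⟩; exact absurd (hadjn j) hnadj
      · rintro ⟨a, -, h⟩; exact absurd h (by simp)
    | some k =>
      simp only [Finset.mem_filter, SimpleGraph.mem_neighborFinset, Finset.mem_image, hadj]
      constructor
      · rintro ⟨h1, h2, h3, w, hw1, hw2, hw3, hw4⟩
        cases w with
        | none => exact absurd (hadjn i) hw4
        | some w' =>
          refine ⟨k, ⟨h1, fun h => h2 (by rw [h]), h3, w', hw1, hw2,
            fun h => hw3 (by rw [h]), hw4⟩, rfl⟩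
      · rintro ⟨a, ⟨h1, h2, h3, w, hw1, hw2, hw3, hw4⟩, heq⟩
        obtain rfl := Option.some_injective V heq
        exact ⟨h1, by simpa using h2, h3, some w, hw1, hw2, by simpa using hw3, hw4⟩
  · intro p hp
    simp only [fourCycles, Finset.mem_filter, Finset.mem_univ, true_and] at hp
    obtain ⟨h1, h2, h3, h4, h5, h6, h7⟩ := hp
    constructor
    · intro hn; rw [hn] at h3; exact h3 (hadjn j)
    · intro hn; rw [hn] at h7; exact h7 (hadjn i)
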